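/- Every essential box of a block-monotone permutation lies in the southeast corner of a block: if v ∈ S_d is a permutation whose permutation matrix, relative to a fixed block decomposition, has 1s arranged NW-to-SE within each block row and each block column, then every element of Fulton's essential set Ess(v) is located at a position (p, q) where p is the last row of a block row and q is the last column of a block column. -/
import Mathlib


/-- Cumulative block sizes. -/
def cum (f : ℕ → ℕ) (k : ℕ) : ℕ := ∑ i ∈ Finset.range k, f i

/-- `(i,j)` (0-indexed) is a box of the Rothe diagram of the permutation `σ` of `Fin d`
(viewed as the matrix with a `1` in position `(r, σ r)`): no `1` weakly north in the same
column and no `1` weakly west in the same row, i.e. `j < σ(i)` and `i < σ⁻¹(j)`. -/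
def inDiagram {d : ℕ} (σ : Equiv.Perm (Fin d)) (i j : ℕ) : Prop :=
  ∃ (hi : i < d) (hj : j < d),
    j < (σ ⟨i, hi⟩).val ∧ i < (σ.symm ⟨j, hj⟩).val

lemma block_exists (f : ℕ → ℕ) : ∀ m i, i < cum f m →
    ∃ a < m, cum f a ≤ i ∧ i < cum f (a + 1) := by
  intro m
  induction m with
  | zero => intro i hi; simp [cum] at hi
  | succ n ih =>
    intro i hi
    by_cases hc : i < cum f n
    · obtain ⟨a, ha, h1, h2⟩ := ih i hc
      exact ⟨a, Nat.lt_succ_of_lt ha, h1, h2⟩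
    · exact ⟨n, Nat.lt_succ_self n, Nat.le_of_not_lt hc, hi⟩

/-- every essential box of a block-monotone permutation lies in the
southeast corner of a block: if the permutation matrix of `σ ∈ S_d`, relative to a block
decomposition into `m` consecutive row blocks of heights `h` and column blocks of widths
`w`, has its `1`s arranged NW-to-SE within each block row and each block column, then
every member `(i,j)` of Fulton's essential set (a diagram box whose south and east
neighbours are not diagram boxes) has `i` the last row of a block row and `j` the last
column of a block column. -/
theorem stmt10 (m d : ℕ) (h w : ℕ → ℕ)
    (hd : d = cum h m) (hw : d = cum w m)
    (σ : Equiv.Perm (Fin d))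
    (mono_row : ∀ (i : ℕ) (r r' : Fin d), i < m →
      cum h i ≤ r.val → r'.val < cum h (i + 1) → r < r' → σ r < σ r')
    (mono_col : ∀ (j : ℕ) (c c' : Fin d), j < m →
      cum w j ≤ c.val → c'.val < cum w (j + 1) → c < c' → σ.symm c < σ.symm c')
    (i j : ℕ)
    (hbox : inDiagram σ i j)
    (hsouth : ¬ inDiagram σ (i + 1) j)
    (heast : ¬ inDiagram σ i (j + 1)) :
    (∃ a < m, i + 1 = cum h (a + 1)) ∧ (∃ c < m, j + 1 = cum w (c + 1)) := by
  obtain ⟨hi, hj, hσ, hσ'⟩ := hbox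
  constructor
  · obtain ⟨a, ham, ha1, ha2⟩ := block_exists h m i (hd ▸ hi)
    refine ⟨a, ham, ?_⟩
    by_contra hne
    have hi1blk : i + 1 < cum h (a + 1) := lt_of_le_of_ne ha2 hne
    have hi1 : i + 1 < d := by
      rw [hd]
      calc i + 1 < cum h (a + 1) := hi1blk
        _ ≤ cum h m := Finset.sum_le_sum_of_subset
            (Finset.range_subset_range.mpr ham)
    have hlt : σ ⟨i, hi⟩ < σ ⟨i + 1, hi1⟩ :=
      mono_row a ⟨i, hi⟩ ⟨i + 1, hi1⟩ ham ha1 hi1blk (by simp [Fin.lt_def])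
    apply hsouth
    refine ⟨hi1, hj, lt_trans hσ hlt, ?_⟩
    have hne2 : (σ.symm ⟨j, hj⟩).val ≠ i + 1 := by
      intro heq
      have : σ.symm ⟨j, hj⟩ = ⟨i + 1, hi1⟩ := Fin.ext heq
      have : σ ⟨i + 1, hi1⟩ = ⟨j, hj⟩ := by
        rw [← this, Equiv.apply_symm_apply]
      rw [this] at hlt
      exact absurd (lt_trans hσ hlt) (by simp [Fin.lt_def])
    exact lt_of_le_of_ne hσ' (Ne.symm hne2)
  · obtain ⟨c, hcm, hc1, hc2⟩ := block_exists w m j (hw ▸ hj)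
    refine ⟨c, hcm, ?_⟩
    by_contra hne
    have hj1blk : j + 1 < cum w (c + 1) := lt_of_le_of_ne hc2 hne
    have hj1 : j + 1 < d := by
      rw [hw]
      calc j + 1 < cum w (c + 1) := hj1blk
        _ ≤ cum w m := Finset.sum_le_sum_of_subset
            (Finset.range_subset_range.mpr hcm)
    have hlt : σ.symm ⟨j, hj⟩ < σ.symm ⟨j + 1, hj1⟩ :=
      mono_col c ⟨j, hj⟩ ⟨j + 1, hj1⟩ hcm hc1 hj1blk (by simp [Fin.lt_def])
    apply heast
    refine ⟨hi, hj1, ?_, lt_trans hσ' hlt⟩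
    have hne2 : (σ ⟨i, hi⟩).val ≠ j + 1 := by
      intro heq
      have : σ ⟨i, hi⟩ = ⟨j + 1, hj1⟩ := Fin.ext heq
      have : σ.symm ⟨j + 1, hj1⟩ = ⟨i, hi⟩ := by
        rw [← this, Equiv.symm_apply_apply]
      rw [this] at hlt
      exact absurd (lt_trans hσ' hlt) (by simp [Fin.lt_def])
    exact lt_of_le_of_ne hσ (Ne.symm hne2)
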